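/- In the automaton A_d(n), the set function τ induced on subsets satisfies: there is a path Q_0^i, Q_1^i, ..., Q_{d^i−1}^i in the power automaton whose transitions are labeled by the consecutive letters of w_i; equivalently, applying w_i to Q_0^i = {q_0^1,...,q_0^i} yields Q_{d^i−1}^i = {q_{d-1}^1,...,q_{d-1}^i}, passing through Q_r^i for every r (where Q_r^i encodes the base-d digits of r). -/

import Mathlib

/-- Alphabet of `A_d(n)`: letter `a`, letters `b_i` and letters `c_i`. -/
inductive LA | a | b (i : ℕ) | c (i : ℕ)
deriving DecidableEq

/-- Partial transition function of `A_d(n)` with `n = d·k`; the state `q_j^i` is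
encoded as the pair `(i, j)` with `1 ≤ i ≤ k` and `0 ≤ j ≤ d-1`. -/
def δAn (d k : ℕ) : ℕ × ℕ → LA → Option (ℕ × ℕ) := fun p x =>
  if ¬(1 ≤ p.1 ∧ p.1 ≤ k ∧ p.2 < d) then none else
  match x with
  | LA.a => some (p.1, 0)
  | LA.b l =>
      if ¬(1 ≤ l ∧ l ≤ k) then none
      else if p.1 = l then (if p.2 + 1 < d then some (p.1, p.2 + 1) else none)
      else if l < p.1 then some (p.1, p.2)
      else if p.2 = d - 1 then some (p.1, 0) else none
  | LA.c l =>
      if ¬(2 ≤ l ∧ l ≤ k) then none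
      else if p.2 ≠ d - 1 then none
      else if l = p.1 then some (p.1 - 1, 0)
      else if p.1 < l then some (p.1, 0)
      else none

/-- The word `w_i`: `w_0 = ε`, `w_{i+1} = (w_i b_{i+1})^{d-1} w_i`. -/
def wordA (d : ℕ) : ℕ → List LA
  | 0 => []
  | i + 1 => (List.replicate (d - 1) (wordA d i ++ [LA.b (i + 1)])).flatten ++ wordA d i

/-- `Q_r^m`: the set `{q_{j_1}^1, …, q_{j_m}^m}` where `(j_m,…,j_1)` are the base-`d`
digits of `r`. -/
def Qset (d m r : ℕ) : Finset (ℕ × ℕ) :=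
  (Finset.Icc 1 m).image (fun i => (i, r / d ^ (i - 1) % d))

/-- One step of the power automaton. -/
def stepSet {Q A : Type*} [DecidableEq Q] (δ : Q → A → Option Q)
    (S : Finset Q) (x : A) : Option (Finset Q) :=
  if ∀ q ∈ S, (δ q x).isSome then some (S.biUnion fun q => (δ q x).toFinset)
  else none

/-- Run of the power automaton on a word. -/
def runSet {Q A : Type*} [DecidableEq Q] (δ : Q → A → Option Q)
    (S : Finset Q) (w : List A) : Option (Finset Q) :=
  List.foldlM (stepSet δ) S w

-- auxiliary lemmas
lemma exists_val (d : ℕ) (hd : 1 < d) (x : ℕ) (hx : 0 < x) :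
    ∃ t, d ^ t ∣ x ∧ ¬ d ^ (t+1) ∣ x := by
  by_contra h
  push_neg at h
  have hall : ∀ t, d ^ t ∣ x := by
    intro t; induction t with
    | zero => simp
    | succ n ih => exact h n ih
  have h1 := Nat.le_of_dvd hx (hall x)
  have h2 := Nat.lt_pow_self (n := x) hd
  omega

lemma val_unique {d x t u : ℕ} (h1 : d^t ∣ x) (h2 : ¬ d^(t+1) ∣ x)
    (h3 : d^u ∣ x) (h4 : ¬ d^(u+1) ∣ x) : t = u := by
  rcases lt_trichotomy t u with h | h | h
  · exact absurd ((pow_dvd_pow d h).trans h3) h2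
  · exact h
  · exact absurd ((pow_dvd_pow d h).trans h1) h4

lemma wordA_length (d : ℕ) (hd : 1 < d) : ∀ m, (wordA d m).length = d ^ m - 1
  | 0 => by simp [wordA]
  | m+1 => by
    have ih := wordA_length d hd m
    have hp : 1 ≤ d ^ m := Nat.one_le_pow _ _ (by omega)
    have key : (d-1) * (d ^ m - 1 + 1) + (d ^ m - 1) = d ^ (m+1) - 1 := by
      rw [Nat.sub_add_cancel hp, pow_succ, mul_comm (d^m) d]
      have hsub : (d-1) * d^m = d * d^m - d^m := by rw [Nat.sub_mul, one_mul]
      have : d^m ≤ d * d^m := Nat.le_mul_of_pos_left _ (by omega)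
      omega
    simpa [wordA, ih] using key

lemma flat_rep_get {α : Type*} (bl w : List α) (s : ℕ) (hs : s < bl.length) :
    ∀ (c qq : ℕ), qq < c →
      ((List.replicate c bl).flatten ++ w)[qq * bl.length + s]? = bl[s]?
  | 0, qq, h => by omega
  | c+1, 0, _ => by
      rw [List.replicate_succ, List.flatten_cons, List.append_assoc]
      rw [zero_mul, zero_add]
      rw [List.getElem?_append, if_pos hs]
  | c+1, qq+1, h => by
      have ih := flat_rep_get bl w s hs c qq (by omega)
      rw [List.replicate_succ, List.flatten_cons, List.append_assoc]
      rw [show (qq+1) * bl.length + s = bl.length + (qq * bl.length + s) by ring]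
      rw [List.getElem?_append_right (by omega)]
      simpa using ih

lemma flat_rep_get_right {α : Type*} (bl w : List α) (c s : ℕ) :
    ((List.replicate c bl).flatten ++ w)[c * bl.length + s]? = w[s]? := by
  have hlen : ((List.replicate c bl).flatten).length = c * bl.length := by simp [mul_comm]
  rw [List.getElem?_append_right (by omega)]
  congr 1
  omega

lemma wordA_get (d : ℕ) (hd : 1 < d) :
    ∀ m r t, r + 1 < d ^ m → d ^ t ∣ r + 1 → ¬ d ^ (t+1) ∣ r + 1 →
      (wordA d m)[r]? = some (LA.b (t+1))
  | 0, r, t, hr, _, _ => by simp at hr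
  | m+1, r, t, hr, h1, h2 => by
    have hp : 1 ≤ d ^ m := Nat.one_le_pow _ _ (by omega)
    set L := d ^ m with hL
    set bl := wordA d m ++ [LA.b (m+1)] with hbl
    have hwl : (wordA d m).length = L - 1 := wordA_length d hd m
    have hbll : bl.length = L := by
      rw [hbl, List.length_append, hwl, List.length_singleton]; omega
    have hrL : r + 1 < L * d := by rw [pow_succ] at hr; exact hr
    set q := r / L with hq
    set s := r % L with hs
    have hLq : L * q + s = r := Nat.div_add_mod r L
    have hsL : s < L := Nat.mod_lt _ (by omega)
    have hqd : q ≤ d - 1 := by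
      by_contra h
      push_neg at h
      have : L * d ≤ L * q := Nat.mul_le_mul_left _ (by omega)
      omega
    have hwa : wordA d (m+1) = (List.replicate (d-1) bl).flatten ++ wordA d m := by
      rw [wordA]
    by_cases hse : s = L - 1
    · -- s = L - 1 : the letter is b (m+1)
      have hq1 : L * (q+1) = r + 1 := by rw [Nat.mul_succ]; omega
      have hqlt : q < d - 1 := by
        rcases lt_or_eq_of_le hqd with h | h
        · exact h
        · exfalso
          have hx : L * (q + 1) = L * d := by rw [h]; congr 1; omega
          omega
      have hd1 : d ^ m ∣ r + 1 := ⟨q + 1, hq1.symm⟩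
      have hd2 : ¬ d ^ (m+1) ∣ r + 1 := fun h =>
        absurd (Nat.le_of_dvd (Nat.succ_pos r) h) (by omega)
      have htm : t = m := val_unique h1 h2 hd1 hd2
      rw [htm]
      have hidx : r = q * bl.length + (L - 1) := by rw [hbll, mul_comm]; omega
      rw [hwa, hidx, flat_rep_get bl (wordA d m) (L-1) (by omega) (d-1) q hqlt]
      rw [hbl, List.getElem?_append_right (by omega), hwl]
      simp
    · -- s < L - 1 : the letter comes from wordA d m at index s
      have hs1 : s + 1 < L := by omega
      have hspos : L * q + (s+1) = r + 1 := by omega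
      have htm : t < m := by
        by_contra h
        push_neg at h
        have hmd : d ^ m ∣ r + 1 := (pow_dvd_pow d h).trans h1
        have hdv : L ∣ s + 1 :=
          (Nat.dvd_add_right (dvd_mul_right L q)).mp (by rw [hspos]; exact hmd)
        have := Nat.le_of_dvd (by omega) hdv
        omega
      have hts : d ^ t ∣ s + 1 := by
        have hdq : d ^ t ∣ L * q := Dvd.dvd.mul_right (pow_dvd_pow d (by omega)) q
        exact (Nat.dvd_add_right hdq).mp (by rw [hspos]; exact h1)
      have hts2 : ¬ d ^ (t+1) ∣ s + 1 := by
        intro h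
        have hdq : d ^ (t+1) ∣ L * q := Dvd.dvd.mul_right (pow_dvd_pow d (by omega)) q
        exact h2 (by rw [← hspos]; exact Nat.dvd_add hdq h)
      have ih := wordA_get d hd m s t hs1 hts hts2
      rcases lt_or_eq_of_le hqd with hqlt | hqe
      · have hidx : r = q * bl.length + s := by rw [hbll, mul_comm]; omega
        rw [hwa, hidx, flat_rep_get bl (wordA d m) s (by omega) (d-1) q hqlt]
        rw [hbl, List.getElem?_append, if_pos (by omega)]
        exact ih
      · have hLe : L * q = L * (d-1) := by rw [hqe]
        have hidx : r = (d-1) * bl.length + s := by rw [hbll, mul_comm]; omega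
        rw [hwa, hidx, flat_rep_get_right]
        exact ih

lemma digit_low (d i s : ℕ) (hd : 1 < d) (hi : 1 ≤ i) (hdvd : d ^ i ∣ s) (hs : 0 < s) :
    (s-1) / d ^ (i-1) % d = d - 1 ∧ s / d ^ (i-1) % d = 0 := by
  obtain ⟨c, hc⟩ := hdvd
  have hP : 0 < d ^ (i-1) := pow_pos (by omega) _
  have hpow : d ^ i = d ^ (i-1) * d := by
    rw [← pow_succ]; congr 1; omega
  have hc' : s = d ^ (i-1) * (d * c) := by rw [hc, hpow]; ring
  have hc1 : 1 ≤ c := by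
    rcases Nat.eq_zero_or_pos c with h | h
    · simp [h] at hc; omega
    · exact h
  constructor
  · -- (s-1) / d^(i-1) % d = d - 1
    have h1 : s - 1 = d ^ (i-1) * (d * c - 1) + (d ^ (i-1) - 1) := by
      have e1 : d ^ (i-1) * (d * c - 1) + d ^ (i-1) = d ^ (i-1) * (d * c) := by
        have h0 : 1 ≤ d * c := Nat.one_le_iff_ne_zero.mpr (by positivity); rw [← Nat.mul_succ]; congr 1; omega
      omega
    rw [h1, Nat.mul_add_div hP, Nat.div_eq_of_lt (by omega), Nat.add_zero]
    have h2 : d * c - 1 = d * (c - 1) + (d - 1) := by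
      have e1 : d * (c-1) + d = d * c := by rw [← Nat.mul_succ]; congr 1; omega
      omega
    rw [h2, Nat.mul_add_mod, Nat.mod_eq_of_lt (by omega)]
  · rw [hc', Nat.mul_div_cancel_left _ hP, Nat.mul_mod_right]

lemma digit_mid (d t s : ℕ) (hd : 1 < d) (h1 : d ^ t ∣ s) (h2 : ¬ d ^ (t+1) ∣ s) :
    s / d ^ t % d = (s-1) / d ^ t % d + 1 ∧ s / d ^ t % d < d := by
  have hs : 0 < s := by
    rcases Nat.eq_zero_or_pos s with h | h
    · subst h; exact absurd (dvd_zero _) h2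
    · exact h
  obtain ⟨a, ha⟩ := h1
  have hP : 0 < d ^ t := pow_pos (by omega) _
  have hu : a % d ≠ 0 := by
    intro h
    exact h2 (by rw [ha, pow_succ]; exact Nat.mul_dvd_mul_left _ (Nat.dvd_of_mod_eq_zero h))
  have ha1 : 1 ≤ a := by
    rcases Nat.eq_zero_or_pos a with h | h
    · simp [h] at ha; omega
    · exact h
  have hda : s / d ^ t = a := by rw [ha, Nat.mul_div_cancel_left _ hP]
  have hda' : (s-1) / d ^ t = a - 1 := by
    have h1 : s - 1 = d ^ t * (a - 1) + (d ^ t - 1) := by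
      have e1 : d ^ t * (a - 1) + d ^ t = d ^ t * a := by rw [← Nat.mul_succ]; congr 1; omega
      omega
    rw [h1, Nat.mul_add_div hP, Nat.div_eq_of_lt (by omega), Nat.add_zero]
  have hdm := Nat.div_add_mod a d
  have hmd : a % d < d := Nat.mod_lt _ (by omega)
  have hmod : (a - 1) % d = a % d - 1 := by
    have h3 : a - 1 = d * (a / d) + (a % d - 1) := by omega
    rw [h3, Nat.mul_add_mod, Nat.mod_eq_of_lt (by omega)]
  rw [hda, hda', hmod]
  omega

lemma digit_high (d n s : ℕ) (hs : 0 < s) (h : ¬ d ^ n ∣ s) :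
    s / d ^ n = (s-1) / d ^ n := by
  have h1 := Nat.succ_div (a := s-1) (b := d ^ n)
  rw [show s - 1 + 1 = s by omega] at h1
  rw [h1, if_neg h, Nat.add_zero]

lemma stepSet_of_forall {Q A : Type*} [DecidableEq Q] (δ : Q → A → Option Q)
    (S : Finset Q) (x : A) (f : Q → Q) (h : ∀ q ∈ S, δ q x = some (f q)) :
    stepSet δ S x = some (S.image f) := by
  unfold stepSet
  rw [if_pos (fun q hq => by rw [h q hq]; rfl)]
  congr 1
  ext y
  simp only [Finset.mem_biUnion, Finset.mem_image, Option.mem_toFinset]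
  constructor
  · rintro ⟨q, hq, hy⟩
    rw [h q hq] at hy
    simp at hy
    exact ⟨q, hq, hy⟩
  · rintro ⟨q, hq, rfl⟩
    exact ⟨q, hq, by rw [h q hq]; simp⟩

lemma δAn_b (d k i j l : ℕ) (h : 1 ≤ i ∧ i ≤ k ∧ j < d) (hl : 1 ≤ l ∧ l ≤ k) :
    δAn d k (i, j) (LA.b l) =
      if i = l then (if j + 1 < d then some (i, j + 1) else none)
      else if l < i then some (i, j)
      else if j = d - 1 then some (i, 0) else none := by
  show (if ¬(1 ≤ i ∧ i ≤ k ∧ j < d) then none else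
      if ¬(1 ≤ l ∧ l ≤ k) then none
      else if i = l then (if j + 1 < d then some (i, j + 1) else none)
      else if l < i then some (i, j)
      else if j = d - 1 then some (i, 0) else none) = _
  rw [if_neg (not_not_intro h), if_neg (not_not_intro hl)]

lemma step_Qset (d k m r t : ℕ) (hd : 1 < d) (hmk : m ≤ k)
    (hr : r + 1 < d ^ m) (h1 : d ^ t ∣ r + 1) (h2 : ¬ d ^ (t+1) ∣ r + 1) :
    stepSet (δAn d k) (Qset d m r) (LA.b (t+1)) = some (Qset d m (r+1)) := by
  have htm : t < m := by
    by_contra h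
    push_neg at h
    have hle : d ^ m ≤ d ^ t := Nat.pow_le_pow_right (by omega) h
    have := Nat.le_of_dvd (Nat.succ_pos r) h1
    omega
  have hstep : stepSet (δAn d k) (Qset d m r) (LA.b (t+1))
      = some ((Qset d m r).image (fun p => (p.1, (r+1) / d ^ (p.1 - 1) % d))) := by
    apply stepSet_of_forall
    intro p hp
    simp only [Qset, Finset.mem_image, Finset.mem_Icc] at hp
    obtain ⟨i, ⟨hi1, hi2⟩, rfl⟩ := hp
    have hcond : 1 ≤ i ∧ i ≤ k ∧ r / d ^ (i-1) % d < d :=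
      ⟨hi1, by omega, Nat.mod_lt _ (by omega)⟩
    have hl : 1 ≤ t + 1 ∧ t + 1 ≤ k := ⟨by omega, by omega⟩
    rw [δAn_b d k i _ (t+1) hcond hl]
    rcases lt_trichotomy i (t+1) with hit | hit | hit
    · -- i ≤ t : digit is d-1, resets to 0
      have hdl := digit_low d i (r+1) hd hi1
        ((pow_dvd_pow d (by omega : i ≤ t)).trans h1) (Nat.succ_pos r)
      simp only [Nat.add_sub_cancel] at hdl
      rw [if_neg (by omega), if_neg (by omega), if_pos hdl.1, hdl.2]
    · -- i = t+1 : digit increments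
      have hdm := digit_mid d t (r+1) hd h1 h2
      simp only [Nat.add_sub_cancel] at hdm
      have hi' : i - 1 = t := by omega
      rw [if_pos hit, hi']
      rw [if_pos (by omega)]
      congr 2
      omega
    · -- i > t+1 : digit unchanged
      have hhigh : (r+1) / d ^ (i-1) = r / d ^ (i-1) := by
        apply digit_high d (i-1) (r+1) (Nat.succ_pos r)
        intro h
        exact h2 ((pow_dvd_pow d (by omega : t+1 ≤ i-1)).trans h)
      rw [if_neg (by omega), if_pos (by omega), hhigh]
  rw [hstep]
  simp only [Qset, Finset.image_image]
  rfl

/-- Lemma 1: the word `w_m` labels the path `Q_0^m, Q_1^m, …, Q_{d^m-1}^m` in the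
power automaton of `A_d(n)`: after reading the first `r` letters of `w_m` the set
`Q_0^m` is taken exactly to `Q_r^m`. -/
theorem wordA_labels_counting_path (d k : ℕ) (hd : 1 < d) (m : ℕ)
    (hm1 : 1 ≤ m) (hmk : m ≤ k) (r : ℕ) (hr : r ≤ d ^ m - 1) :
    runSet (δAn d k) (Qset d m 0) ((wordA d m).take r) = some (Qset d m r) := by
  have hp : 1 ≤ d ^ m := Nat.one_le_pow _ _ (by omega)
  have hlen := wordA_length d hd m
  induction r with
  | zero => simp [runSet]
  | succ r ih =>
    have ihr := ih (by omega)
    have hr1 : r + 1 < d ^ m := by omega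
    obtain ⟨t, ht1, ht2⟩ := exists_val d hd (r+1) (Nat.succ_pos r)
    have hget : (wordA d m)[r]? = some (LA.b (t+1)) := wordA_get d hd m r t hr1 ht1 ht2
    rw [List.take_succ, hget]
    unfold runSet at ihr ⊢
    rw [List.foldlM_append, ihr]
    simp only [Option.toList_some, List.foldlM_cons, List.foldlM_nil, Option.bind_eq_bind,
      Option.bind_some]
    rw [step_Qset d k m r t hd hmk hr1 ht1 ht2]
    simp
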